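/- arXiv:2011.13030 — 2 statements merged into one kernel-verified Lean document; each statement's English description precedes it below -/
import Mathlib

section
/- Let U and H be separable Hilbert spaces, (S(t))_{t≥0} a C₀-semigroup of bounded linear operators on H, p ∈ [1,∞), (Ω,𝔉,ℙ) a probability space, and σ : Ω → L(U,H) a strongly measurable random bounded operator such that σ(ω) is a compact operator for almost every ω and E[‖σ‖_op^p] < ∞. Let (Δ_n)_{n∈ℕ} be a sequence of positive reals decreasing to 0. Then the random variables sup_{x∈[0,Δ_n]} ‖(I − S(x))∘σ‖_op converge to 0 almost surely and in L^p, i.e. E[sup_{x∈[0,Δ_n]} ‖(I − S(x))∘σ‖_op^p] → 0 as n → ∞. -/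
open MeasureTheory Filter
open scoped Topology

open Metric in
lemma aux_compact_unif {U H : Type*}
    [NormedAddCommGroup U] [NormedSpace ℝ U]
    [NormedAddCommGroup H] [NormedSpace ℝ H]
    (S : ℝ → H →L[ℝ] H) (hS0 : S 0 = 1)
    (hScont : ∀ h : H, ContinuousOn (fun t => S t h) (Set.Ici (0 : ℝ)))
    {b C : ℝ} (hb : 0 < b) (hC : 0 ≤ C) (hSC : ∀ x ∈ Set.Icc (0:ℝ) b, ‖S x‖ ≤ C)
    (T : U →L[ℝ] H) (hT : IsCompactOperator T) {ε : ℝ} (hε : 0 < ε) :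
    ∃ δ, 0 < δ ∧ δ ≤ b ∧ ∀ x ∈ Set.Icc (0:ℝ) δ, ‖T - (S x).comp T‖ ≤ ε := by
  have h1C : (0:ℝ) < 1 + C := by linarith
  set r : ℝ := ε / (2 * (1 + C)) with hr
  have hrpos : 0 < r := by positivity
  obtain ⟨K, hKc, hKs⟩ :=
    (hT.image_closedBall_subset_compact (𝕜₁ := ℝ) (f := (T : U →ₗ[ℝ] H)) 1 : _)
  have hTB : TotallyBounded ((T : U →ₗ[ℝ] H) '' closedBall 0 1) :=
    hKc.totallyBounded.subset hKs
  obtain ⟨t, htf, htsub⟩ := totallyBounded_iff.mp hTB r hrpos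
  have hev : ∀ᶠ x in 𝓝[Set.Ici (0:ℝ)] 0, ∀ y ∈ t, ‖y - S x y‖ < ε / 2 := by
    rw [eventually_all_finite htf]
    intro y _
    have h0 : Tendsto (fun x => S x y) (𝓝[Set.Ici (0:ℝ)] 0) (𝓝 y) := by
      have := (hScont y 0 (Set.self_mem_Ici)).tendsto
      rwa [hS0] at this
    have := h0 (Metric.ball_mem_nhds y (half_pos hε))
    filter_upwards [this] with x hx
    simp only [Set.mem_preimage, mem_ball, dist_eq_norm] at hx
    rw [← norm_neg]; simpa [neg_sub] using hx
  obtain ⟨δ', hδ', hsub⟩ := mem_nhdsGE_iff_exists_Icc_subset.mp hev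
  refine ⟨min δ' b, lt_min hδ' hb, min_le_right _ _, ?_⟩
  intro x hx
  have hxb : x ∈ Set.Icc 0 b := ⟨hx.1, hx.2.trans (min_le_right _ _)⟩
  have hxδ : x ∈ Set.Icc 0 δ' := ⟨hx.1, hx.2.trans (min_le_left _ _)⟩
  have hxev := hsub hxδ
  apply ContinuousLinearMap.opNorm_le_of_unit_norm hε.le
  intro u hu
  have hTu : T u ∈ (T : U →ₗ[ℝ] H) '' closedBall 0 1 :=
    ⟨u, by simp [mem_closedBall, dist_eq_norm, hu], rfl⟩
  obtain ⟨y, hyt, hy⟩ := Set.mem_iUnion₂.mp (htsub hTu)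
  rw [mem_ball, dist_eq_norm] at hy
  have key : (T - (S x).comp T) u = ((T u - y) - S x (T u - y)) + (y - S x y) := by
    simp only [ContinuousLinearMap.sub_apply, ContinuousLinearMap.comp_apply, map_sub]
    abel
  rw [key]
  have h2 : ‖S x (T u - y)‖ ≤ C * r := by
    calc ‖S x (T u - y)‖ ≤ ‖S x‖ * ‖T u - y‖ := (S x).le_opNorm _
    _ ≤ C * r := mul_le_mul (hSC x hxb) hy.le (norm_nonneg _) hC
  calc ‖((T u - y) - S x (T u - y)) + (y - S x y)‖
      ≤ ‖(T u - y) - S x (T u - y)‖ + ‖y - S x y‖ := norm_add_le _ _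
    _ ≤ (‖T u - y‖ + ‖S x (T u - y)‖) + ‖y - S x y‖ := by
        gcongr; exact norm_sub_le _ _
    _ ≤ (r + C * r) + ε / 2 :=
        add_le_add (add_le_add hy.le h2) (hxev y hyt).le
    _ = ε := by
          have := div_mul_cancel₀ ε (by positivity : (2 * (1 + C)) ≠ 0)
          rw [← hr] at this
          linear_combination this / 2

/-- Let `(S(t))_{t≥0}` be a `C₀`-semigroup on a separable Hilbert space `H`,
`p ∈ [1,∞)`, and `σ` a strongly measurable random bounded operator from `U` to `H` which is
almost surely compact and satisfies `E[‖σ‖_op^p] < ∞`. For positive reals `Δ_n ↓ 0`, the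
random variables `sup_{x∈[0,Δ_n]} ‖(I − S(x))∘σ‖_op` converge to `0` almost surely and in
`L^p`, i.e. `E[sup_{x∈[0,Δ_n]} ‖(I − S(x))∘σ‖_op^p] → 0`. -/
theorem stmt7
    {U H : Type*}
    [NormedAddCommGroup U] [InnerProductSpace ℝ U] [CompleteSpace U]
    [TopologicalSpace.SeparableSpace U]
    [NormedAddCommGroup H] [InnerProductSpace ℝ H] [CompleteSpace H]
    [TopologicalSpace.SeparableSpace H]
    (S : ℝ → H →L[ℝ] H)
    (hS0 : S 0 = 1)
    (hSsemi : ∀ s t : ℝ, 0 ≤ s → 0 ≤ t → S (s + t) = (S s).comp (S t))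
    (hScont : ∀ h : H, ContinuousOn (fun t => S t h) (Set.Ici (0 : ℝ)))
    (p : ℝ) (hp : 1 ≤ p)
    {Ω : Type*} [MeasurableSpace Ω] (μ : Measure Ω) [IsProbabilityMeasure μ]
    (σ : Ω → U →L[ℝ] H)
    (hσmeas : StronglyMeasurable σ)
    (hσcpt : ∀ᵐ ω ∂μ, IsCompactOperator (σ ω))
    (hσint : Integrable (fun ω => ‖σ ω‖ ^ p) μ)
    (Δ : ℕ → ℝ) (hΔpos : ∀ n, 0 < Δ n) (hΔanti : Antitone Δ)
    (hΔlim : Tendsto Δ atTop (𝓝 0)) :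
    (∀ᵐ ω ∂μ,
      Tendsto (fun n => ⨆ x : Set.Icc (0 : ℝ) (Δ n), ‖σ ω - (S x).comp (σ ω)‖)
        atTop (𝓝 0)) ∧
    Tendsto (fun n =>
        ∫ ω, (⨆ x : Set.Icc (0 : ℝ) (Δ n), ‖σ ω - (S x).comp (σ ω)‖) ^ p ∂μ)
      atTop (𝓝 0) := by
  haveI hne : ∀ n, Nonempty (Set.Icc (0:ℝ) (Δ n)) :=
    fun n => ⟨⟨0, le_refl 0, (hΔpos n).le⟩⟩
  -- uniform bound on ‖S x‖ for x ∈ [0, Δ 0]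
  obtain ⟨C₀, hC₀⟩ : ∃ C₀, ∀ i : Set.Icc (0:ℝ) (Δ 0), ‖S i‖ ≤ C₀ := by
    apply banach_steinhaus
    intro h
    obtain ⟨C, hC⟩ := isCompact_Icc.exists_bound_of_continuousOn
      ((hScont h).mono Set.Icc_subset_Ici_self)
    exact ⟨C, fun i => hC i i.2⟩
  set C : ℝ := max C₀ 0 with hCdef
  have hC : 0 ≤ C := le_max_right _ _
  have hSC : ∀ x ∈ Set.Icc (0:ℝ) (Δ 0), ‖S x‖ ≤ C :=
    fun x hx => le_trans (hC₀ ⟨x, hx⟩) (le_max_left _ _)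
  have hIcc : ∀ n, Set.Icc (0:ℝ) (Δ n) ⊆ Set.Icc (0:ℝ) (Δ 0) :=
    fun n => Set.Icc_subset_Icc le_rfl (hΔanti (Nat.zero_le n))
  -- pointwise bound
  have hb1 : ∀ (n : ℕ) (T : U →L[ℝ] H), ∀ x ∈ Set.Icc (0:ℝ) (Δ n),
      ‖T - (S x).comp T‖ ≤ (1 + C) * ‖T‖ := by
    intro n T x hx
    calc ‖T - (S x).comp T‖ ≤ ‖T‖ + ‖(S x).comp T‖ := norm_sub_le _ _
      _ ≤ ‖T‖ + ‖S x‖ * ‖T‖ := by gcongr; exact ContinuousLinearMap.opNorm_comp_le _ _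
      _ ≤ ‖T‖ + C * ‖T‖ := by gcongr; exact hSC x (hIcc n hx)
      _ = (1 + C) * ‖T‖ := by ring
  have hbdd : ∀ (n : ℕ) (T : U →L[ℝ] H),
      BddAbove (Set.range fun x : Set.Icc (0:ℝ) (Δ n) => ‖T - (S x).comp T‖) := by
    intro n T
    refine ⟨(1 + C) * ‖T‖, ?_⟩
    rintro v ⟨x, rfl⟩
    exact hb1 n T x x.2
  have hg0 : ∀ (n : ℕ) (T : U →L[ℝ] H),
      0 ≤ ⨆ x : Set.Icc (0:ℝ) (Δ n), ‖T - (S x).comp T‖ := by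
    intro n T
    exact le_ciSup_of_le (hbdd n T) ⟨0, le_refl 0, (hΔpos n).le⟩ (norm_nonneg _)
  have hgle : ∀ (n : ℕ) (T : U →L[ℝ] H),
      (⨆ x : Set.Icc (0:ℝ) (Δ n), ‖T - (S x).comp T‖) ≤ (1 + C) * ‖T‖ :=
    fun n T => ciSup_le fun x => hb1 n T x x.2
  -- Lipschitz continuity of the sup in T
  have hlip : ∀ (n : ℕ) (T T' : U →L[ℝ] H),
      (⨆ x : Set.Icc (0:ℝ) (Δ n), ‖T - (S x).comp T‖)
        ≤ (⨆ x : Set.Icc (0:ℝ) (Δ n), ‖T' - (S x).comp T'‖) + (1 + C) * ‖T - T'‖ := by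
    intro n T T'
    apply ciSup_le
    intro x
    have key : T - (S x).comp T
        = (T' - (S x).comp T') + ((T - T') - (S x).comp (T - T')) := by
      rw [ContinuousLinearMap.comp_sub]; abel
    calc ‖T - (S x).comp T‖
        ≤ ‖T' - (S x).comp T'‖ + ‖(T - T') - (S x).comp (T - T')‖ := by
          rw [key]; exact norm_add_le _ _
      _ ≤ (⨆ x : Set.Icc (0:ℝ) (Δ n), ‖T' - (S x).comp T'‖) + (1 + C) * ‖T - T'‖ :=
          add_le_add (le_ciSup (hbdd n T') x) (hb1 n (T - T') x x.2)
  have hcont : ∀ n : ℕ, Continuous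
      (fun T : U →L[ℝ] H => ⨆ x : Set.Icc (0:ℝ) (Δ n), ‖T - (S x).comp T‖) := by
    intro n
    refine (LipschitzWith.of_dist_le_mul (K := ⟨1 + C, by linarith⟩) ?_).continuous
    intro T T'
    rw [Real.dist_eq, dist_eq_norm]
    rw [abs_le]
    constructor
    · have := hlip n T' T
      rw [norm_sub_rev T' T] at this
      push_cast
      change -((1 + C) * _) ≤ _
      linarith
    · have := hlip n T T'
      push_cast
      change _ ≤ (1 + C) * _
      linarith
  -- convergence for compact operators
  have hconv : ∀ T : U →L[ℝ] H, IsCompactOperator T →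
      Tendsto (fun n => ⨆ x : Set.Icc (0:ℝ) (Δ n), ‖T - (S x).comp T‖) atTop (𝓝 0) := by
    intro T hT
    rw [Metric.tendsto_atTop]
    intro ε hε
    obtain ⟨δ, hδpos, hδb, hδ⟩ := aux_compact_unif S hS0 hScont (hΔpos 0) hC hSC T hT
      (half_pos hε)
    obtain ⟨N, hN⟩ := (hΔlim.eventually (gt_mem_nhds hδpos)).exists_forall_of_atTop
    refine ⟨N, fun n hn => ?_⟩
    rw [Real.dist_eq, sub_zero, abs_of_nonneg (hg0 n T)]
    have hle : (⨆ x : Set.Icc (0:ℝ) (Δ n), ‖T - (S x).comp T‖) ≤ ε / 2 := by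
      apply ciSup_le
      intro x
      exact hδ x ⟨x.2.1, x.2.2.trans (hN n hn).le⟩
    linarith
  have hppos : 0 < p := lt_of_lt_of_le one_pos hp
  -- continuity of rpow
  have hrpow : Continuous (fun y : ℝ => y ^ p) := by
    apply continuous_iff_continuousAt.mpr
    intro y
    exact Real.continuousAt_rpow_const y p (Or.inr hppos.le)
  constructor
  · filter_upwards [hσcpt] with ω hω using hconv _ hω
  · have hFmeas : ∀ n : ℕ, AEStronglyMeasurable
        (fun ω => (⨆ x : Set.Icc (0:ℝ) (Δ n), ‖σ ω - (S x).comp (σ ω)‖) ^ p) μ :=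
      fun n => ((hrpow.comp (hcont n)).comp_stronglyMeasurable hσmeas).aestronglyMeasurable
    have hbound_int : Integrable (fun ω => (1 + C) ^ p * ‖σ ω‖ ^ p) μ :=
      hσint.const_mul _
    have h_bound : ∀ n : ℕ, ∀ᵐ ω ∂μ,
        ‖(⨆ x : Set.Icc (0:ℝ) (Δ n), ‖σ ω - (S x).comp (σ ω)‖) ^ p‖
          ≤ (1 + C) ^ p * ‖σ ω‖ ^ p := by
      intro n
      filter_upwards with ω
      rw [Real.norm_eq_abs, abs_of_nonneg (Real.rpow_nonneg (hg0 n (σ ω)) p)]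
      calc (⨆ x : Set.Icc (0:ℝ) (Δ n), ‖σ ω - (S x).comp (σ ω)‖) ^ p
          ≤ ((1 + C) * ‖σ ω‖) ^ p :=
            Real.rpow_le_rpow (hg0 n (σ ω)) (hgle n (σ ω)) hppos.le
        _ = (1 + C) ^ p * ‖σ ω‖ ^ p := Real.mul_rpow (by linarith) (norm_nonneg _)
    have h_lim : ∀ᵐ ω ∂μ, Tendsto
        (fun n => (⨆ x : Set.Icc (0:ℝ) (Δ n), ‖σ ω - (S x).comp (σ ω)‖) ^ p)
        atTop (𝓝 0) := by
      filter_upwards [hσcpt] with ω hω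
      have h1 := (hrpow.tendsto 0).comp (hconv _ hω)
      rwa [Real.zero_rpow hppos.ne'] at h1
    have := tendsto_integral_of_dominated_convergence _ hFmeas hbound_int h_bound h_lim
    simpa using this
end

section
/- Let U and H be separable Hilbert spaces, (S(t))_{t≥0} a C₀-semigroup of bounded linear operators on H, p ∈ [1,∞), T > 0, (Ω,𝔉,ℙ) a probability space, and (σ_s)_{s∈[0,T]} a family of strongly measurable random bounded operators from U to H such that: σ_s(ω) is compact for almost every ω for each s; E[‖σ_s‖_op^p] < ∞ for each s; and s ↦ σ_s is continuous in the p-th mean, i.e. E[‖σ_t − σ_s‖_op^p] → 0 as t → s for s,t ∈ [0,T]. Then for any sequence (Δ_n) of positive reals decreasing to 0, sup_{s∈[0,T]} E[sup_{x∈[0,Δ_n]} ‖(I − S(x))∘σ_s‖_op^p] → 0 as n → ∞. -/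
open MeasureTheory Filter
open scoped Topology

open Metric Set
open scoped ENNReal NNReal

section aux
variable {U H : Type*}
    [NormedAddCommGroup U] [NormedSpace ℝ U]
    [NormedAddCommGroup H] [NormedSpace ℝ H]

lemma aux_bound (S : ℝ → H →L[ℝ] H) {M b x : ℝ}
    (hM : ∀ y ∈ Set.Icc (0:ℝ) b, ‖S y‖ ≤ M) (hx : x ∈ Set.Icc (0:ℝ) b)
    (A : U →L[ℝ] H) : ‖A - (S x).comp A‖ ≤ (1 + M) * ‖A‖ := by
  have h1 : ‖(S x).comp A‖ ≤ ‖S x‖ * ‖A‖ := ContinuousLinearMap.opNorm_comp_le _ _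
  have h2 : ‖S x‖ ≤ M := hM x hx
  have := norm_sub_le A ((S x).comp A)
  nlinarith [norm_nonneg A]

lemma aux_bddAbove (S : ℝ → H →L[ℝ] H) {M b Δ : ℝ}
    (hM : ∀ y ∈ Set.Icc (0:ℝ) b, ‖S y‖ ≤ M) (hΔ : Δ ≤ b)
    (A : U →L[ℝ] H) :
    BddAbove (Set.range fun x : Set.Icc (0:ℝ) Δ => ‖A - (S x).comp A‖) := by
  refine ⟨(1 + M) * ‖A‖, ?_⟩
  rintro r ⟨⟨x, hx⟩, rfl⟩
  exact aux_bound S hM ⟨hx.1, hx.2.trans hΔ⟩ A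

lemma aux_sup_bound (S : ℝ → H →L[ℝ] H) {M b Δ : ℝ}
    (hM : ∀ y ∈ Set.Icc (0:ℝ) b, ‖S y‖ ≤ M) (hΔ0 : 0 ≤ Δ) (hΔ : Δ ≤ b)
    (A : U →L[ℝ] H) :
    (⨆ x : Set.Icc (0:ℝ) Δ, ‖A - (S x).comp A‖) ≤ (1 + M) * ‖A‖ := by
  have : Nonempty (Set.Icc (0:ℝ) Δ) := ⟨⟨0, le_refl _, hΔ0⟩⟩
  exact ciSup_le fun ⟨x, hx⟩ => aux_bound S hM ⟨hx.1, hx.2.trans hΔ⟩ A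


variable {U H : Type*}
    [NormedAddCommGroup U] [NormedSpace ℝ U]
    [NormedAddCommGroup H] [NormedSpace ℝ H]

lemma aux_unif (S : ℝ → H →L[ℝ] H) (hS0 : S 0 = 1)
    (hScont : ∀ h : H, ContinuousOn (fun t => S t h) (Set.Ici (0 : ℝ)))
    {M b : ℝ} (hb : 0 < b) (hM : ∀ x ∈ Set.Icc (0:ℝ) b, ‖S x‖ ≤ M) (hM0 : 0 ≤ M)
    {K : Set H} (hK : IsCompact K) {ε : ℝ} (hε : 0 < ε) :
    ∃ δ, 0 < δ ∧ δ ≤ b ∧ ∀ x ∈ Set.Icc (0:ℝ) δ, ∀ h ∈ K, ‖h - S x h‖ ≤ ε := by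
  set r : ℝ := ε / (3 * (M + 1)) with hr
  have hrpos : 0 < r := by positivity
  -- for each c, a small interval where ‖c - S x c‖ < ε/3
  have hc : ∀ c : H, ∃ u, 0 < u ∧ ∀ x ∈ Set.Icc (0:ℝ) u, ‖c - S x c‖ < ε / 3 := by
    intro c
    have hcont : ContinuousWithinAt (fun t => S t c) (Set.Ici (0:ℝ)) 0 :=
      hScont c 0 (Set.self_mem_Ici)
    have h0 : (fun t => S t c) 0 = c := by simp [hS0]
    have hev : ∀ᶠ x in 𝓝[Set.Ici (0:ℝ)] 0, ‖c - S x c‖ < ε / 3 := by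
      have : Tendsto (fun t => S t c) (𝓝[Set.Ici (0:ℝ)] 0) (𝓝 c) := by
        have h' := hcont.tendsto
        simp only [hS0, ContinuousLinearMap.one_apply] at h'
        exact h'
      have hball : Metric.ball c (ε/3) ∈ 𝓝 c := Metric.ball_mem_nhds _ (by positivity)
      filter_upwards [this hball] with x hx
      have : dist (S x c) c < ε / 3 := by simpa [Metric.mem_ball] using hx
      calc ‖c - S x c‖ = dist (S x c) c := by rw [dist_eq_norm, norm_sub_rev]
      _ < ε / 3 := this
    rw [Filter.eventually_iff, mem_nhdsGE_iff_exists_Icc_subset] at hev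
    obtain ⟨u, hu, hsub⟩ := hev
    exact ⟨u, hu, fun x hx => hsub hx⟩
  choose dlt dpos dprop using hc
  -- cover K by balls of radius r
  obtain ⟨t, htK, htcov⟩ := hK.elim_nhds_subcover (fun c => Metric.ball c r)
    (fun c _ => Metric.ball_mem_nhds _ hrpos)
  rcases t.eq_empty_or_nonempty with rfl | htne
  · refine ⟨b, hb, le_refl _, fun x hx h hh => absurd (htcov hh) (by simp)⟩
  · set δ : ℝ := min b (t.inf' htne dlt) with hδ
    have hδpos : 0 < δ := by
      refine lt_min hb ?_
      rw [Finset.lt_inf'_iff]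
      exact fun c _ => dpos c
    refine ⟨δ, hδpos, min_le_left _ _, fun x hx h hh => ?_⟩
    obtain ⟨c, hct, hhc⟩ := Set.mem_iUnion₂.1 (htcov hh)
    have hxb : x ∈ Set.Icc (0:ℝ) b := ⟨hx.1, hx.2.trans (min_le_left _ _)⟩
    have hxc : x ∈ Set.Icc (0:ℝ) (dlt c) :=
      ⟨hx.1, hx.2.trans ((min_le_right _ _).trans (Finset.inf'_le _ hct))⟩
    have h1 : ‖h - c‖ < r := by
      have := mem_ball_iff_norm.1 hhc
      simpa using this
    have h2 : ‖c - S x c‖ < ε / 3 := dprop c x hxc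
    have h3 : ‖S x c - S x h‖ ≤ M * r := by
      have : ‖S x (c - h)‖ ≤ ‖S x‖ * ‖c - h‖ := (S x).le_opNorm _
      have hsm : ‖S x‖ ≤ M := hM x hxb
      have hnorm : ‖c - h‖ ≤ r := by rw [norm_sub_rev]; exact h1.le
      calc ‖S x c - S x h‖ = ‖S x (c - h)‖ := by rw [map_sub]
      _ ≤ ‖S x‖ * ‖c - h‖ := this
      _ ≤ M * r := by
          apply mul_le_mul hsm hnorm (norm_nonneg _) hM0
    have key : ‖h - S x h‖ ≤ ‖h - c‖ + ‖c - S x c‖ + ‖S x c - S x h‖ := by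
      have heq : h - S x h = (h - c) + (c - S x c) + (S x c - S x h) := by abel
      calc ‖h - S x h‖ = ‖(h - c) + (c - S x c) + (S x c - S x h)‖ := by rw [heq]
      _ ≤ ‖(h - c) + (c - S x c)‖ + ‖S x c - S x h‖ := norm_add_le _ _
      _ ≤ ‖h - c‖ + ‖c - S x c‖ + ‖S x c - S x h‖ := by
          gcongr; exact norm_add_le _ _
    have hrcalc : r + ε/3 + M * r ≤ ε := by
      have hM1 : M + 1 ≠ 0 := by positivity
      have : (1 + M) * r = ε / 3 := by rw [hr]; field_simp; ring
      nlinarith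
    nlinarith

-- sup over a dense subset equals the sup, by strong continuity
lemma aux_dense_eq (S : ℝ → H →L[ℝ] H)
    (hScont : ∀ h : H, ContinuousOn (fun t => S t h) (Set.Ici (0 : ℝ)))
    {M b Δ : ℝ} (hM : ∀ y ∈ Set.Icc (0:ℝ) b, ‖S y‖ ≤ M)
    (hΔ0 : 0 ≤ Δ) (hΔ : Δ ≤ b)
    {D : Set ℝ} (hD0 : (0:ℝ) ∈ D) (hDsub : D ⊆ Set.Icc (0:ℝ) Δ)
    (hDdense : Set.Icc (0:ℝ) Δ ⊆ closure D)
    (A : U →L[ℝ] H) :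
    (⨆ x : Set.Icc (0:ℝ) Δ, ‖A - (S x).comp A‖) = ⨆ q : D, ‖A - (S q).comp A‖ := by
  have hne : Nonempty (Set.Icc (0:ℝ) Δ) := ⟨⟨0, le_refl _, hΔ0⟩⟩
  have hneD : Nonempty D := ⟨⟨0, hD0⟩⟩
  have hbddI : BddAbove (Set.range fun x : Set.Icc (0:ℝ) Δ => ‖A - (S x).comp A‖) :=
    aux_bddAbove S hM hΔ A
  have hbddD : BddAbove (Set.range fun q : D => ‖A - (S q).comp A‖) := by
    obtain ⟨C, hC⟩ := hbddI
    refine ⟨C, ?_⟩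
    rintro r ⟨⟨q, hq⟩, rfl⟩
    exact hC ⟨⟨q, hDsub hq⟩, rfl⟩
  apply le_antisymm
  · set R := ⨆ q : D, ‖A - (S q).comp A‖ with hR
    have hR0 : 0 ≤ R := by
      have := le_ciSup hbddD (⟨0, hD0⟩ : D)
      exact le_trans (norm_nonneg _) this
    refine ciSup_le fun ⟨x, hx⟩ => ?_
    refine ContinuousLinearMap.opNorm_le_bound _ hR0 fun u => ?_
    -- approximate x by a sequence in D
    obtain ⟨d, hd, hdx⟩ := mem_closure_iff_seq_limit.1 (hDdense hx)
    have hcont : Tendsto (fun k => ‖A u - S (d k) (A u)‖) atTop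
        (𝓝 ‖A u - S x (A u)‖) := by
      have hc : ContinuousWithinAt (fun t => S t (A u)) (Set.Ici (0:ℝ)) x :=
        hScont (A u) x (Set.mem_Ici.2 hx.1)
      have hseq : Tendsto d atTop (𝓝[Set.Ici (0:ℝ)] x) := by
        apply tendsto_nhdsWithin_of_tendsto_nhds_of_eventually_within _ hdx
        exact Eventually.of_forall fun k => (hDsub (hd k)).1
      exact ((continuous_norm.tendsto _).comp
        (((continuous_const.sub continuous_id).tendsto _).comp (hc.tendsto.comp hseq)))
    have hbd : ∀ k, ‖A u - S (d k) (A u)‖ ≤ R * ‖u‖ := by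
      intro k
      have h1 : ‖A - (S (d k)).comp A‖ ≤ R := le_ciSup hbddD (⟨d k, hd k⟩ : D)
      have h2 : ‖(A - (S (d k)).comp A) u‖ ≤ ‖A - (S (d k)).comp A‖ * ‖u‖ :=
        (A - (S (d k)).comp A).le_opNorm u
      have h3 : (A - (S (d k)).comp A) u = A u - S (d k) (A u) := by
        simp [ContinuousLinearMap.sub_apply]
      rw [h3] at h2
      exact h2.trans (by gcongr)
    have : (A - (S x).comp A) u = A u - S x (A u) := by
      simp [ContinuousLinearMap.sub_apply]
    rw [this]
    exact le_of_tendsto hcont (Eventually.of_forall hbd)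
  · refine ciSup_le fun ⟨q, hq⟩ => ?_
    exact le_ciSup hbddI (⟨q, hDsub hq⟩ : Set.Icc (0:ℝ) Δ)

-- aux_tendsto and measurability
lemma aux_tendsto (S : ℝ → H →L[ℝ] H) (hS0 : S 0 = 1)
    (hScont : ∀ h : H, ContinuousOn (fun t => S t h) (Set.Ici (0 : ℝ)))
    {M b : ℝ} (hb : 0 < b) (hM : ∀ x ∈ Set.Icc (0:ℝ) b, ‖S x‖ ≤ M) (hM0 : 0 ≤ M)
    (Δ : ℕ → ℝ) (hΔpos : ∀ n, 0 < Δ n) (hΔlim : Tendsto Δ atTop (𝓝 0))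
    {A : U →L[ℝ] H} (hA : IsCompactOperator A) :
    Tendsto (fun n => ⨆ x : Set.Icc (0:ℝ) (Δ n), ‖A - (S x).comp A‖) atTop (𝓝 0) := by
  rw [Metric.tendsto_atTop]
  intro ε hε
  set K : Set H := closure (A '' Metric.closedBall 0 1) with hK
  have hKcpt : IsCompact K := by
    have := IsCompactOperator.isCompact_closure_image_closedBall
      (𝕜₁ := ℝ) (f := (A : U →ₗ[ℝ] H)) hA 1
    simpa [hK] using this
  obtain ⟨δ, hδpos, hδb, hδ⟩ := aux_unif S hS0 hScont hb hM hM0 hKcpt (half_pos hε)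
  obtain ⟨N, hN⟩ := (Metric.tendsto_atTop.1 hΔlim) δ hδpos
  refine ⟨N, fun n hn => ?_⟩
  have hΔδ : Δ n ≤ δ := by
    have := hN n hn
    rw [Real.dist_eq, sub_zero, abs_of_pos (hΔpos n)] at this
    exact this.le
  have hne : Nonempty (Set.Icc (0:ℝ) (Δ n)) := ⟨⟨0, le_refl _, (hΔpos n).le⟩⟩
  have hle : (⨆ x : Set.Icc (0:ℝ) (Δ n), ‖A - (S x).comp A‖) ≤ ε / 2 := by
    refine ciSup_le fun ⟨x, hx⟩ => ?_
    refine ContinuousLinearMap.opNorm_le_bound _ (half_pos hε).le fun u => ?_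
    have hmem : x ∈ Set.Icc (0:ℝ) δ := ⟨hx.1, hx.2.trans hΔδ⟩
    have happ : (A - (S x).comp A) u = A u - S x (A u) := by
      simp [ContinuousLinearMap.sub_apply]
    rw [happ]
    rcases eq_or_ne u 0 with rfl | hu
    · simp
    · have hu' : (0:ℝ) < ‖u‖ := norm_pos_iff.2 hu
      -- apply with the normalized vector
      set v : U := ‖u‖⁻¹ • u with hv
      have hvK : A v ∈ K := by
        apply subset_closure
        exact ⟨v, by simp [hv, norm_smul, abs_of_pos hu', inv_mul_cancel₀ hu'.ne'], rfl⟩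
      have := hδ x hmem (A v) hvK
      have hAv : A v - S x (A v) = ‖u‖⁻¹ • (A u - S x (A u)) := by
        simp [hv, _root_.map_smul, smul_sub]
      rw [hAv, norm_smul, Real.norm_eq_abs, abs_of_pos (by positivity)] at this
      calc ‖A u - S x (A u)‖ = ‖u‖ * (‖u‖⁻¹ * ‖A u - S x (A u)‖) := by
            field_simp
      _ ≤ ‖u‖ * (ε / 2) := by gcongr
      _ = ε / 2 * ‖u‖ := by ring
  have hge : 0 ≤ ⨆ x : Set.Icc (0:ℝ) (Δ n), ‖A - (S x).comp A‖ :=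
    Real.iSup_nonneg fun _ => norm_nonneg _
  rw [Real.dist_eq, sub_zero, abs_of_nonneg hge]
  exact lt_of_le_of_lt hle (half_lt_self hε)

lemma aux_meas (S : ℝ → H →L[ℝ] H)
    (hScont : ∀ h : H, ContinuousOn (fun t => S t h) (Set.Ici (0 : ℝ)))
    {M b Δ : ℝ} (hM : ∀ y ∈ Set.Icc (0:ℝ) b, ‖S y‖ ≤ M)
    (hΔ0 : 0 ≤ Δ) (hΔ : Δ ≤ b)
    {Ω : Type*} [MeasurableSpace Ω] {g : Ω → U →L[ℝ] H}
    (hg : StronglyMeasurable g) :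
    Measurable (fun ω => ⨆ x : Set.Icc (0:ℝ) Δ, ‖g ω - (S x).comp (g ω)‖) := by
  obtain ⟨D₀, hD₀sub, hD₀c, hD₀d⟩ :=
    (TopologicalSpace.IsSeparable.of_separableSpace (Set.Icc (0:ℝ) Δ)).exists_countable_dense_subset
  set D : Set ℝ := insert 0 D₀ with hD
  have hD0 : (0:ℝ) ∈ D := Set.mem_insert _ _
  have hDsub : D ⊆ Set.Icc (0:ℝ) Δ := by
    rw [hD]
    exact Set.insert_subset ⟨le_refl _, hΔ0⟩ hD₀sub
  have hDdense : Set.Icc (0:ℝ) Δ ⊆ closure D := by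
    refine hD₀d.trans (closure_mono ?_)
    exact Set.subset_insert _ _
  have hDc : D.Countable := hD₀c.insert 0
  have heq : (fun ω => ⨆ x : Set.Icc (0:ℝ) Δ, ‖g ω - (S x).comp (g ω)‖)
      = fun ω => ⨆ q : D, ‖g ω - (S q).comp (g ω)‖ := by
    funext ω
    exact aux_dense_eq S hScont hM hΔ0 hΔ hD0 hDsub hDdense (g ω)
  rw [heq]
  have : Countable D := hDc.to_subtype
  refine Measurable.iSup fun q => ?_
  have hcontq : Continuous (fun A : U →L[ℝ] H => ‖A - (S q).comp A‖) := by
    have h1 : Continuous (fun A : U →L[ℝ] H => (S q).comp A) :=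
      (ContinuousLinearMap.compL ℝ U H H (S ↑q)).continuous
    exact (continuous_id.sub h1).norm
  exact (hcontq.comp_stronglyMeasurable hg).measurable

end aux

/-- Let `(S(t))_{t≥0}` be a `C₀`-semigroup on a separable Hilbert space `H`,
`p ∈ [1,∞)`, `T > 0`, and `(σ_s)_{s∈[0,T]}` a family of strongly measurable random bounded
operators from `U` to `H`, almost surely compact, with `E[‖σ_s‖_op^p] < ∞` and continuous in
the `p`-th mean.  Then for positive reals `Δ_n ↓ 0`,
`sup_{s∈[0,T]} E[sup_{x∈[0,Δ_n]} ‖(I − S(x))∘σ_s‖_op^p] → 0` as `n → ∞`. -/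
theorem stmt8
    {U H : Type*}
    [NormedAddCommGroup U] [InnerProductSpace ℝ U] [CompleteSpace U]
    [TopologicalSpace.SeparableSpace U]
    [NormedAddCommGroup H] [InnerProductSpace ℝ H] [CompleteSpace H]
    [TopologicalSpace.SeparableSpace H]
    (S : ℝ → H →L[ℝ] H)
    (hS0 : S 0 = 1)
    (hSsemi : ∀ s t : ℝ, 0 ≤ s → 0 ≤ t → S (s + t) = (S s).comp (S t))
    (hScont : ∀ h : H, ContinuousOn (fun t => S t h) (Set.Ici (0 : ℝ)))
    (p : ℝ) (hp : 1 ≤ p) (T : ℝ) (hT : 0 < T)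
    {Ω : Type*} [MeasurableSpace Ω] (μ : Measure Ω) [IsProbabilityMeasure μ]
    (σ : ℝ → Ω → U →L[ℝ] H)
    (hσmeas : ∀ s ∈ Set.Icc (0 : ℝ) T, StronglyMeasurable (σ s))
    (hσcpt : ∀ s ∈ Set.Icc (0 : ℝ) T, ∀ᵐ ω ∂μ, IsCompactOperator (σ s ω))
    (hσint : ∀ s ∈ Set.Icc (0 : ℝ) T, Integrable (fun ω => ‖σ s ω‖ ^ p) μ)
    (hσcont : ∀ s ∈ Set.Icc (0 : ℝ) T,
      Tendsto (fun t => ∫ ω, ‖σ t ω - σ s ω‖ ^ p ∂μ) (nhdsWithin s (Set.Icc (0 : ℝ) T)) (𝓝 0))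
    (Δ : ℕ → ℝ) (hΔpos : ∀ n, 0 < Δ n) (hΔanti : Antitone Δ)
    (hΔlim : Tendsto Δ atTop (𝓝 0)) :
    Tendsto (fun n => ⨆ s : Set.Icc (0 : ℝ) T,
        ∫ ω, (⨆ x : Set.Icc (0 : ℝ) (Δ n), ‖σ s ω - (S x).comp (σ s ω)‖) ^ p ∂μ)
      atTop (𝓝 0) := by
  classical
  have hp0 : (0:ℝ) < p := lt_of_lt_of_le one_pos hp
  set b : ℝ := Δ 0 with hbdef
  have hbpos : 0 < b := hΔpos 0
  have hΔb : ∀ n, Δ n ≤ b := fun n => hΔanti (Nat.zero_le n)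
  -- uniform bound on the semigroup on [0, b]
  obtain ⟨M₀, hM₀⟩ : ∃ C, ∀ i : Set.Icc (0:ℝ) b, ‖S ↑i‖ ≤ C := by
    apply banach_steinhaus (g := fun i : Set.Icc (0:ℝ) b => S ↑i)
    intro h
    obtain ⟨C, hC⟩ := (isCompact_Icc (a := (0:ℝ)) (b := b)).exists_bound_of_continuousOn
      ((hScont h).mono Set.Icc_subset_Ici_self)
    exact ⟨C, fun i => hC i i.2⟩
  set M : ℝ := max M₀ 0 with hMdef
  have hM : ∀ x ∈ Set.Icc (0:ℝ) b, ‖S x‖ ≤ M := fun x hx =>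
    (hM₀ ⟨x, hx⟩).trans (le_max_left _ _)
  have hM0 : 0 ≤ M := le_max_right _ _
  have h1M : (0:ℝ) < 1 + M := by linarith
  -- the sup functions
  set F : ℕ → ℝ → Ω → ℝ :=
    fun n s ω => ⨆ x : Set.Icc (0:ℝ) (Δ n), ‖σ s ω - (S ↑x).comp (σ s ω)‖ with hFdef
  have hFnonneg : ∀ n s ω, 0 ≤ F n s ω := fun n s ω =>
    Real.iSup_nonneg fun _ => norm_nonneg _
  have hFbound : ∀ n s ω, F n s ω ≤ (1 + M) * ‖σ s ω‖ := fun n s ω =>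
    aux_sup_bound S hM (hΔpos n).le (hΔb n) (σ s ω)
  have hFmeas : ∀ n, ∀ s ∈ Set.Icc (0:ℝ) T, Measurable (F n s) := fun n s hs =>
    aux_meas S hScont hM (hΔpos n).le (hΔb n) (hσmeas s hs)
  have hFpmeas : ∀ n, ∀ s ∈ Set.Icc (0:ℝ) T,
      AEStronglyMeasurable (fun ω => F n s ω ^ p) μ := fun n s hs =>
    ((hFmeas n s hs).pow measurable_const).aestronglyMeasurable
  have hFint : ∀ n, ∀ s ∈ Set.Icc (0:ℝ) T, Integrable (fun ω => F n s ω ^ p) μ := by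
    intro n s hs
    refine Integrable.mono' (((hσint s hs).const_mul ((1+M)^p))) (hFpmeas n s hs)
      (Eventually.of_forall fun ω => ?_)
    rw [Real.norm_eq_abs, abs_of_nonneg (Real.rpow_nonneg (hFnonneg n s ω) p)]
    calc F n s ω ^ p ≤ ((1 + M) * ‖σ s ω‖) ^ p :=
          Real.rpow_le_rpow (hFnonneg n s ω) (hFbound n s ω) hp0.le
    _ = (1+M)^p * ‖σ s ω‖^p := Real.mul_rpow h1M.le (norm_nonneg _)
  have hI0 : ∀ n s, 0 ≤ ∫ ω, F n s ω ^ p ∂μ := fun n s =>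
    integral_nonneg fun ω => Real.rpow_nonneg (hFnonneg n s ω) p
  -- Step D: pointwise (in s) convergence of the integrals
  have hD : ∀ s ∈ Set.Icc (0:ℝ) T,
      Tendsto (fun n => ∫ ω, F n s ω ^ p ∂μ) atTop (𝓝 0) := by
    intro s hs
    have h := tendsto_integral_of_dominated_convergence
      (F := fun n ω => F n s ω ^ p) (f := fun _ => (0:ℝ))
      (bound := fun ω => (1+M)^p * ‖σ s ω‖^p)
      (fun n => hFpmeas n s hs)
      ((hσint s hs).const_mul ((1+M)^p))
      (fun n => Eventually.of_forall fun ω => by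
        rw [Real.norm_eq_abs, abs_of_nonneg (Real.rpow_nonneg (hFnonneg n s ω) p)]
        calc F n s ω ^ p ≤ ((1 + M) * ‖σ s ω‖) ^ p :=
              Real.rpow_le_rpow (hFnonneg n s ω) (hFbound n s ω) hp0.le
        _ = (1+M)^p * ‖σ s ω‖^p := Real.mul_rpow h1M.le (norm_nonneg _))
      ?_
    · simpa using h
    · filter_upwards [hσcpt s hs] with ω hω
      have h1 : Tendsto (fun n => F n s ω) atTop (𝓝 0) :=
        aux_tendsto S hS0 hScont hbpos hM hM0 Δ hΔpos hΔlim hω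
      have hc : ContinuousAt (fun y : ℝ => y ^ p) 0 :=
        Real.continuousAt_rpow_const 0 p (Or.inr hp0.le)
      have := hc.tendsto.comp h1
      simpa [Function.comp_def, Real.zero_rpow hp0.ne'] using this
  -- ℒp membership
  set q : ℝ≥0∞ := ENNReal.ofReal p with hqdef
  have hq0 : q ≠ 0 := by
    simp only [hqdef, ne_eq, ENNReal.ofReal_eq_zero, not_le]
    exact hp0
  have hqt : q ≠ ⊤ := ENNReal.ofReal_ne_top
  have hqreal : q.toReal = p := ENNReal.toReal_ofReal hp0.le
  have hMem : ∀ s ∈ Set.Icc (0:ℝ) T, MemLp (σ s) q μ := by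
    intro s hs
    apply (memLp_norm_rpow_iff (p := q) (hσmeas s hs).aestronglyMeasurable hq0 hqt).mp
    rw [ENNReal.div_self hq0 hqt, hqreal]
    exact memLp_one_iff_integrable.mpr (hσint s hs)
  have hsubint : ∀ s ∈ Set.Icc (0:ℝ) T, ∀ s' ∈ Set.Icc (0:ℝ) T,
      Integrable (fun ω => ‖σ s ω - σ s' ω‖ ^ p) μ := by
    intro s hs s' hs'
    have := ((hMem s hs).sub (hMem s' hs')).integrable_norm_rpow hq0 hqt
    simpa [hqreal] using this
  -- main estimate
  rw [Metric.tendsto_atTop]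
  intro ε hε
  set η : ℝ := (ε/2) / (2 + M) ^ p with hηdef
  have h2M : (0:ℝ) < 2 + M := by linarith
  have h2Mp : (0:ℝ) < (2 + M) ^ p := Real.rpow_pos_of_pos h2M p
  have hη : 0 < η := by positivity
  -- the covering
  have hcover : ∀ i : Set.Icc (0:ℝ) T, ∃ V : Set ℝ, IsOpen V ∧ (i:ℝ) ∈ V ∧
      ∀ t ∈ V ∩ Set.Icc (0:ℝ) T, ∫ ω, ‖σ t ω - σ (i:ℝ) ω‖ ^ p ∂μ < η := by
    rintro ⟨s', hs'⟩
    have hev := (hσcont s' hs') (Iio_mem_nhds hη)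
    rw [mem_map, mem_nhdsWithin] at hev
    obtain ⟨V, hVopen, hVmem, hVsub⟩ := hev
    exact ⟨V, hVopen, hVmem, fun t ht => hVsub ht⟩
  choose V hVopen hVmem hVsub using hcover
  obtain ⟨tfin, htfin⟩ := isCompact_Icc.elim_finite_subcover V hVopen
    (fun x hx => Set.mem_iUnion.2 ⟨⟨x, hx⟩, hVmem ⟨x, hx⟩⟩)
  have hev2 : ∀ᶠ n in atTop, ∀ i ∈ tfin, ∫ ω, F n (↑i) ω ^ p ∂μ < η := by
    rw [eventually_all_finset]
    exact fun i _ => (hD ↑i i.2).eventually_lt_const hη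
  obtain ⟨N, hN⟩ := eventually_atTop.1 hev2
  refine ⟨N, fun n hn => ?_⟩
  have hne : Nonempty (Set.Icc (0:ℝ) (Δ n)) := ⟨⟨0, le_refl _, (hΔpos n).le⟩⟩
  -- the key uniform bound
  have key : ∀ s : Set.Icc (0:ℝ) T, ∫ ω, F n (↑s) ω ^ p ∂μ ≤ ε / 2 := by
    rintro ⟨s, hs⟩
    obtain ⟨i, hit, hsV⟩ : ∃ i, i ∈ tfin ∧ s ∈ V i := by
      have h := htfin hs
      rw [Set.mem_iUnion₂] at h
      obtain ⟨i, h1, h2⟩ := h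
      exact ⟨i, h1, h2⟩
    have hs' : (i:ℝ) ∈ Set.Icc (0:ℝ) T := i.2
    have hW : ∫ ω, ‖σ s ω - σ (↑i) ω‖ ^ p ∂μ < η := hVsub i s ⟨hsV, hs⟩
    have hIi : ∫ ω, F n (↑i) ω ^ p ∂μ < η := hN n hn i hit
    -- pointwise triangle inequality
    have hptw : ∀ ω, F n s ω ≤ F n (↑i) ω + (1 + M) * ‖σ s ω - σ (↑i) ω‖ := by
      intro ω
      refine ciSup_le fun ⟨x, hx⟩ => ?_
      have hxb : x ∈ Set.Icc (0:ℝ) b := ⟨hx.1, hx.2.trans (hΔb n)⟩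
      have heq : σ s ω - (S x).comp (σ s ω) =
          (σ (↑i) ω - (S x).comp (σ (↑i) ω)) +
          ((σ s ω - σ (↑i) ω) - (S x).comp (σ s ω - σ (↑i) ω)) := by
        rw [ContinuousLinearMap.comp_sub]; abel
      calc ‖σ s ω - (S x).comp (σ s ω)‖
          ≤ ‖σ (↑i) ω - (S x).comp (σ (↑i) ω)‖ +
            ‖(σ s ω - σ (↑i) ω) - (S x).comp (σ s ω - σ (↑i) ω)‖ := by
            rw [heq]; exact norm_add_le _ _
      _ ≤ F n (↑i) ω + (1 + M) * ‖σ s ω - σ (↑i) ω‖ :=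
            add_le_add (le_ciSup (aux_bddAbove S hM (hΔb n) (σ (↑i) ω)) ⟨x, hx⟩)
              (aux_bound S hM hxb _)
    -- ENNReal bookkeeping
    set G : Ω → ℝ≥0∞ := fun ω => ENNReal.ofReal (F n s ω) with hGdef
    set G' : Ω → ℝ≥0∞ := fun ω => ENNReal.ofReal (F n (↑i) ω) with hG'def
    set Φ : Ω → ℝ≥0∞ := fun ω => ENNReal.ofReal ((1 + M) * ‖σ s ω - σ (↑i) ω‖) with hΦdef
    have hJ : ENNReal.ofReal (∫ ω, F n s ω ^ p ∂μ) = ∫⁻ ω, (G ω) ^ p ∂μ := by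
      rw [ofReal_integral_eq_lintegral_ofReal (hFint n s hs)
        (Eventually.of_forall fun ω => Real.rpow_nonneg (hFnonneg n s ω) p)]
      exact lintegral_congr fun ω =>
        (ENNReal.ofReal_rpow_of_nonneg (hFnonneg n s ω) hp0.le).symm
    have hJ' : ENNReal.ofReal (∫ ω, F n (↑i) ω ^ p ∂μ) = ∫⁻ ω, (G' ω) ^ p ∂μ := by
      rw [ofReal_integral_eq_lintegral_ofReal (hFint n (↑i) hs')
        (Eventually.of_forall fun ω => Real.rpow_nonneg (hFnonneg n (↑i) ω) p)]
      exact lintegral_congr fun ω =>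
        (ENNReal.ofReal_rpow_of_nonneg (hFnonneg n (↑i) ω) hp0.le).symm
    have hmr : ∀ ω, ((1+M) * ‖σ s ω - σ (↑i) ω‖) ^ p
        = (1+M)^p * ‖σ s ω - σ (↑i) ω‖ ^ p := fun ω =>
      Real.mul_rpow h1M.le (norm_nonneg _)
    have hΦint : Integrable (fun ω => ((1+M) * ‖σ s ω - σ (↑i) ω‖) ^ p) μ := by
      have h := (hsubint s hs (↑i) hs').const_mul ((1+M)^p)
      exact h.congr (Eventually.of_forall fun ω => (hmr ω).symm)
    have hΦlint : ∫⁻ ω, (Φ ω) ^ p ∂μ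
        = ENNReal.ofReal (∫ ω, ((1+M) * ‖σ s ω - σ (↑i) ω‖) ^ p ∂μ) := by
      rw [ofReal_integral_eq_lintegral_ofReal hΦint
        (Eventually.of_forall fun ω => Real.rpow_nonneg (by positivity) p)]
      exact lintegral_congr fun ω =>
        ENNReal.ofReal_rpow_of_nonneg (by positivity) hp0.le
    have hΦsmall : ∫ ω, ((1+M) * ‖σ s ω - σ (↑i) ω‖) ^ p ∂μ ≤ (1+M)^p * η := by
      have heq2 : ∫ ω, ((1+M) * ‖σ s ω - σ (↑i) ω‖) ^ p ∂μ
          = (1+M)^p * ∫ ω, ‖σ s ω - σ (↑i) ω‖ ^ p ∂μ := by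
        simp_rw [hmr]
        exact integral_const_mul _ _
      rw [heq2]
      have := Real.rpow_nonneg h1M.le p
      nlinarith [hW.le]
    -- measurability for Minkowski
    have hG'meas : AEMeasurable G' μ :=
      (ENNReal.measurable_ofReal.comp (hFmeas n (↑i) hs')).aemeasurable
    have hΦmeas : AEMeasurable Φ μ := by
      have h1 : Measurable fun ω => (1+M) * ‖σ s ω - σ (↑i) ω‖ :=
        (((hσmeas s hs).sub (hσmeas (↑i) hs')).norm.measurable).const_mul _
      exact (ENNReal.measurable_ofReal.comp h1).aemeasurable
    have h1p : (0:ℝ) ≤ 1/p := by positivity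
    -- Minkowski
    have hmink : (∫⁻ ω, (G ω) ^ p ∂μ) ^ (1/p)
        ≤ (∫⁻ ω, (G' ω) ^ p ∂μ) ^ (1/p) + (∫⁻ ω, (Φ ω) ^ p ∂μ) ^ (1/p) := by
      calc (∫⁻ ω, (G ω) ^ p ∂μ) ^ (1/p)
          ≤ (∫⁻ ω, (G' ω + Φ ω) ^ p ∂μ) ^ (1/p) := by
            refine ENNReal.rpow_le_rpow (lintegral_mono fun ω =>
              ENNReal.rpow_le_rpow ?_ hp0.le) h1p
            calc G ω ≤ ENNReal.ofReal (F n (↑i) ω + (1+M) * ‖σ s ω - σ (↑i) ω‖) :=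
                  ENNReal.ofReal_le_ofReal (hptw ω)
            _ ≤ G' ω + Φ ω := ENNReal.ofReal_add_le
      _ ≤ _ := ENNReal.lintegral_Lp_add_le hG'meas hΦmeas hp
    -- bound the two summands
    have hRHS1 : (∫⁻ ω, (G' ω) ^ p ∂μ) ^ (1/p) ≤ (ENNReal.ofReal η) ^ (1/p) := by
      rw [← hJ']
      exact ENNReal.rpow_le_rpow (ENNReal.ofReal_le_ofReal hIi.le) h1p
    have hRHS2 : (∫⁻ ω, (Φ ω) ^ p ∂μ) ^ (1/p)
        ≤ ENNReal.ofReal (1+M) * (ENNReal.ofReal η) ^ (1/p) := by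
      rw [hΦlint]
      calc (ENNReal.ofReal (∫ ω, ((1+M) * ‖σ s ω - σ (↑i) ω‖) ^ p ∂μ)) ^ (1/p)
          ≤ (ENNReal.ofReal ((1+M)^p * η)) ^ (1/p) :=
            ENNReal.rpow_le_rpow (ENNReal.ofReal_le_ofReal hΦsmall) h1p
      _ = ENNReal.ofReal (1+M) * (ENNReal.ofReal η) ^ (1/p) := by
          rw [ENNReal.ofReal_mul (Real.rpow_nonneg h1M.le p),
            ← ENNReal.ofReal_rpow_of_nonneg h1M.le hp0.le,
            ENNReal.mul_rpow_of_nonneg _ _ h1p,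
            ← ENNReal.rpow_mul, mul_one_div_cancel hp0.ne', ENNReal.rpow_one]
    -- combine
    have hcomb : (ENNReal.ofReal (∫ ω, F n s ω ^ p ∂μ)) ^ (1/p)
        ≤ ENNReal.ofReal (2 + M) * (ENNReal.ofReal η) ^ (1/p) := by
      rw [hJ]
      calc (∫⁻ ω, (G ω) ^ p ∂μ) ^ (1/p)
          ≤ (∫⁻ ω, (G' ω) ^ p ∂μ) ^ (1/p) + (∫⁻ ω, (Φ ω) ^ p ∂μ) ^ (1/p) := hmink
      _ ≤ (ENNReal.ofReal η) ^ (1/p) + ENNReal.ofReal (1+M) * (ENNReal.ofReal η) ^ (1/p) :=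
            add_le_add hRHS1 hRHS2
      _ = (1 + ENNReal.ofReal (1+M)) * (ENNReal.ofReal η) ^ (1/p) := by
            rw [add_mul, one_mul]
      _ = ENNReal.ofReal (2 + M) * (ENNReal.ofReal η) ^ (1/p) := by
            rw [← ENNReal.ofReal_one, ← ENNReal.ofReal_add one_pos.le h1M.le,
              show (1:ℝ) + (1 + M) = 2 + M by ring]
    -- raise to power p
    have hfinal : ENNReal.ofReal (∫ ω, F n s ω ^ p ∂μ) ≤ ENNReal.ofReal (ε/2) := by
      have hXY : ENNReal.ofReal (∫ ω, F n s ω ^ p ∂μ)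
          ≤ (ENNReal.ofReal (2 + M) * (ENNReal.ofReal η) ^ (1/p)) ^ p := by
        have h2 : ENNReal.ofReal (∫ ω, F n s ω ^ p ∂μ)
            = ((ENNReal.ofReal (∫ ω, F n s ω ^ p ∂μ)) ^ (1/p)) ^ p := by
          rw [← ENNReal.rpow_mul, one_div, inv_mul_cancel₀ hp0.ne', ENNReal.rpow_one]
        rw [h2]
        exact ENNReal.rpow_le_rpow hcomb hp0.le
      refine hXY.trans (le_of_eq ?_)
      rw [ENNReal.mul_rpow_of_nonneg _ _ hp0.le, ← ENNReal.rpow_mul,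
        one_div, inv_mul_cancel₀ hp0.ne', ENNReal.rpow_one,
        ENNReal.ofReal_rpow_of_nonneg h2M.le hp0.le,
        ← ENNReal.ofReal_mul (Real.rpow_nonneg h2M.le p)]
      congr 1
      rw [hηdef]
      field_simp
    rw [ENNReal.ofReal_le_ofReal_iff (by positivity)] at hfinal
    exact hfinal
  -- conclude
  have hTne : Nonempty (Set.Icc (0:ℝ) T) := ⟨⟨0, le_refl _, hT.le⟩⟩
  have hsup_le : (⨆ s : Set.Icc (0:ℝ) T, ∫ ω, F n (↑s) ω ^ p ∂μ) ≤ ε/2 := ciSup_le key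
  have hsup_ge : 0 ≤ ⨆ s : Set.Icc (0:ℝ) T, ∫ ω, F n (↑s) ω ^ p ∂μ :=
    Real.iSup_nonneg fun s => hI0 n ↑s
  rw [Real.dist_eq, sub_zero, abs_of_nonneg hsup_ge]
  linarith
end
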